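/- Let μ₁, …, μ_{n-2} : ℝ → ℝ be differentiable functions and κ₃, …, κ_{n-1} : ℝ → ℝ functions satisfying: μ₁' = μ₂·κ₃; μ_{i-1}·κ_{i+1} + μ_i' = μ_{i+1}·κ_{i+2} for i ∈ {2, …, n−3}; and μ_{n-3}·κ_{n-1} + μ_{n-2}' = 0. Then the function s ↦ μ₁(s)² + μ₂(s)² + ⋯ + μ_{n-2}(s)² is constant. -/

import Mathlib

theorem stmt_11 (n : ℕ) (hn : 4 ≤ n) (μ κ : ℕ → ℝ → ℝ)
    (hdiff : ∀ i, Differentiable ℝ (μ i))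
    (h1 : ∀ s : ℝ, deriv (μ 1) s = μ 2 s * κ 3 s)
    (h2 : ∀ i, 2 ≤ i → i ≤ n - 3 →
      ∀ s : ℝ, μ (i - 1) s * κ (i + 1) s + deriv (μ i) s = μ (i + 1) s * κ (i + 2) s)
    (h3 : ∀ s : ℝ, μ (n - 3) s * κ (n - 1) s + deriv (μ (n - 2)) s = 0) :
    ∃ C : ℝ, ∀ s : ℝ, ∑ i ∈ Finset.Icc 1 (n - 2), (μ i s) ^ 2 = C := by
  obtain ⟨m, rfl⟩ : ∃ m, n = m + 4 := ⟨n - 4, by omega⟩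
  have hs2 : m + 4 - 2 = m + 2 := by omega
  have hs3 : m + 4 - 3 = m + 1 := by omega
  have hs1 : m + 4 - 1 = m + 3 := by omega
  rw [hs2]
  simp only [hs2, hs3, hs1] at h2 h3
  set f : ℝ → ℝ := fun s => ∑ i ∈ Finset.Icc 1 (m + 2), (μ i s) ^ 2 with hf
  have hfd : Differentiable ℝ f := by
    apply Differentiable.fun_sum
    intro i _
    exact (hdiff i).pow 2
  have hderiv : ∀ s, deriv f s = 0 := by
    intro s
    have hsum : HasDerivAt f (∑ i ∈ Finset.Icc 1 (m + 2),
        2 * μ i s * deriv (μ i) s) s := by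
      apply HasDerivAt.fun_sum
      intro i _
      have h := ((hdiff i) s).hasDerivAt
      have := h.fun_pow 2
      simpa [mul_comm, mul_assoc, mul_left_comm] using this
    rw [hsum.deriv]
    set G : ℕ → ℝ := fun i => if i = 0 then 0 else if i = m + 2 then 0
      else μ i s * μ (i + 1) s * κ (i + 2) s with hG
    have key : ∀ i ∈ Finset.Icc 1 (m + 2),
        2 * μ i s * deriv (μ i) s = 2 * (G i - G (i - 1)) := by
      intro i hi
      simp only [Finset.mem_Icc] at hi
      rcases Nat.lt_or_ge i 2 with h | h
      · have hi1 : i = 1 := by omega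
        subst hi1
        have hne : (1 : ℕ) ≠ m + 2 := by omega
        simp only [hG, h1 s]
        simp [hne]
        ring
      · rcases Nat.lt_or_ge i (m + 2) with h' | h'
        · have hd : deriv (μ i) s = μ (i + 1) s * κ (i + 2) s
              - μ (i - 1) s * κ (i + 1) s := by
            have := h2 i h (by omega) s; linarith
          have e1 : i - 1 + 1 = i := by omega
          have e2 : i - 1 + 2 = i + 1 := by omega
          have ne0 : i ≠ 0 := by omega
          have neM : i ≠ m + 2 := by omega
          have ne0' : i - 1 ≠ 0 := by omega
          have neM' : i - 1 ≠ m + 2 := by omega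
          simp only [hG, hd, if_neg ne0, if_neg neM, if_neg ne0', if_neg neM', e1, e2]
          ring
        · have hiM : i = m + 2 := by omega
          subst hiM
          have hd : deriv (μ (m + 2)) s = -(μ (m + 1) s * κ (m + 3) s) := by
            have := h3 s; linarith
          have ne0 : m + 2 ≠ 0 := by omega
          have ne0' : m + 2 - 1 ≠ 0 := by omega
          have neM' : m + 2 - 1 ≠ m + 2 := by omega
          have e1 : m + 2 - 1 = m + 1 := by omega
          simp only [hG, hd, if_neg ne0, if_pos rfl, if_true, e1,
            if_neg (by omega : m + 1 ≠ 0), if_neg (by omega : m + 1 ≠ m + 2)]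
          ring
    rw [Finset.sum_congr rfl key, ← Finset.mul_sum]
    have htel : ∑ i ∈ Finset.Icc 1 (m + 2), (G i - G (i - 1)) = G (m + 2) - G 0 := by
      have hIcc : Finset.Icc 1 (m + 2) = Finset.Ico 1 (m + 3) := by
        rw [show m + 3 = m + 2 + 1 from rfl, Finset.Ico_add_one_right_eq_Icc]
      rw [hIcc, Finset.sum_Ico_eq_sum_range]
      have hms : m + 3 - 1 = m + 2 := by omega
      rw [hms]
      have : ∀ j, G (1 + j) - G (1 + j - 1) = G (j + 1) - G j := by
        intro j
        congr 1 <;> congr 1 <;> omega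
      simp only [this]
      exact Finset.sum_range_sub G (m + 2)
    rw [htel]
    simp [hG]
  refine ⟨f 0, fun s => ?_⟩
  exact is_const_of_deriv_eq_zero hfd hderiv s 0
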